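/- For each fixed z ∈ ℂ, the value Δ̂_C(z; θ₀) converges to Δ̂_R(z) as θ₀ → 0 along θ₀ ≠ 0, where for θ₀ ≠ 0, Δ̂_C(z; θ₀) = z² − 2θ₀(θ₀ − sin θ₀ cos θ₀)/(θ₀² − sin²θ₀)·z + θ₀²(θ₀² + sin²θ₀)/(θ₀² − sin²θ₀) + e^{−z}( 2θ₀(θ₀ cos θ₀ − sin θ₀)/(θ₀² − sin²θ₀)·z − 2θ₀³ sin θ₀/(θ₀² − sin²θ₀) ), and Δ̂_R(z) = z² − 4z + 6 − e^{−z}(2z + 6). -/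

import Mathlib

open Complex Filter Topology

private lemma squeeze_aux {f g : ℝ → ℝ} {c : ℝ}
    (hg : Tendsto g (𝓝[≠] (0:ℝ)) (𝓝 0))
    (h : ∀ᶠ x in 𝓝[≠] (0:ℝ), |f x - c| ≤ g x) :
    Tendsto f (𝓝[≠] (0:ℝ)) (𝓝 c) := by
  rw [← tendsto_sub_nhds_zero_iff]
  exact squeeze_zero_norm' (by simpa [Real.norm_eq_abs] using h) hg

private lemma ev_small : ∀ᶠ x : ℝ in 𝓝[≠] (0:ℝ), |x| ≤ 1 :=
  eventually_nhdsWithin_of_eventually_nhds <| by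
    filter_upwards [Metric.ball_mem_nhds (0:ℝ) one_pos] with x hx
    rw [Metric.mem_ball, Real.dist_eq, sub_zero] at hx
    exact hx.le

private lemma tendsto_abs_mul (c : ℝ) (n : ℕ) (hn : n ≠ 0) :
    Tendsto (fun x : ℝ => |x| ^ n * c) (𝓝[≠] (0:ℝ)) (𝓝 0) := by
  have h : Tendsto (fun x : ℝ => |x| ^ n * c) (𝓝 (0:ℝ)) (𝓝 (|(0:ℝ)| ^ n * c)) :=
    ((_root_.continuous_abs.pow n).mul continuous_const).tendsto 0
  have : |(0:ℝ)| ^ n * c = 0 := by simp [zero_pow hn]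
  rw [this] at h
  exact h.mono_left nhdsWithin_le_nhds

private lemma L1 : Tendsto (fun x : ℝ => (x - Real.sin x) / x ^ 3) (𝓝[≠] (0:ℝ)) (𝓝 (1/6)) := by
  apply squeeze_aux (g := fun x => |x| ^ 1 * (5/96)) (tendsto_abs_mul _ _ one_ne_zero)
  filter_upwards [self_mem_nhdsWithin, ev_small] with x hx hx1
  have hx' : x ≠ 0 := hx
  have hx0 : (0:ℝ) < |x| := abs_pos.mpr hx
  have h3 : x ^ 3 ≠ 0 := pow_ne_zero _ hx
  have key : (x - Real.sin x) / x ^ 3 - 1/6 = -((Real.sin x - (x - x ^ 3 / 6)) / x ^ 3) := by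
    field_simp; ring
  rw [key, abs_neg, abs_div, _root_.abs_pow]
  rw [div_le_iff₀ (by positivity)]
  calc |Real.sin x - (x - x ^ 3 / 6)| ≤ |x| ^ 4 * (5/96) := (Real.sin_bound hx1).trans (by have h4 := pow_nonneg (abs_nonneg x) 4; have e : |x| ^ 5 = |x| ^ 4 * |x| := (by ring); rw [e]; nlinarith [mul_nonneg h4 (sub_nonneg.2 hx1)])
    _ = |x| ^ 1 * (5/96) * |x| ^ 3 := by ring

private lemma L2 : Tendsto (fun x : ℝ => (Real.sin x - x * Real.cos x) / x ^ 3)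
    (𝓝[≠] (0:ℝ)) (𝓝 (1/3)) := by
  apply squeeze_aux (g := fun x => |x| ^ 1 * (5/96) + |x| ^ 2 * (5/96))
    (by simpa using (tendsto_abs_mul (5/96) 1 one_ne_zero).add (tendsto_abs_mul (5/96) 2 two_ne_zero))
  filter_upwards [self_mem_nhdsWithin, ev_small] with x hx hx1
  have hx' : x ≠ 0 := hx
  have hx0 : (0:ℝ) < |x| := abs_pos.mpr hx
  have h3 : x ^ 3 ≠ 0 := pow_ne_zero _ hx
  have key : (Real.sin x - x * Real.cos x) / x ^ 3 - 1/3 =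
      ((Real.sin x - (x - x ^ 3 / 6)) - x * (Real.cos x - (1 - x ^ 2 / 2))) / x ^ 3 := by
    field_simp; ring
  rw [key, abs_div, _root_.abs_pow, div_le_iff₀ (by positivity)]
  calc |(Real.sin x - (x - x ^ 3 / 6)) - x * (Real.cos x - (1 - x ^ 2 / 2))|
      ≤ |Real.sin x - (x - x ^ 3 / 6)| + |x * (Real.cos x - (1 - x ^ 2 / 2))| :=
        abs_sub _ _
    _ = |Real.sin x - (x - x ^ 3 / 6)| + |x| * |Real.cos x - (1 - x ^ 2 / 2)| := by
        rw [abs_mul]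
    _ ≤ |x| ^ 4 * (5/96) + |x| * (|x| ^ 4 * (5/96)) := by
        gcongr
        · exact (Real.sin_bound hx1).trans (by have h4 := pow_nonneg (abs_nonneg x) 4; have e : |x| ^ 5 = |x| ^ 4 * |x| := (by ring); rw [e]; nlinarith [mul_nonneg h4 (sub_nonneg.2 hx1)])
        · exact Real.cos_bound hx1
    _ = (|x| ^ 1 * (5/96) + |x| ^ 2 * (5/96)) * |x| ^ 3 := by ring

private lemma Lsin : Tendsto (fun x : ℝ => Real.sin x / x) (𝓝[≠] (0:ℝ)) (𝓝 1) := by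
  apply squeeze_aux (g := fun x => |x| ^ 2 * (1/6) + |x| ^ 3 * (5/96))
    (by simpa using (tendsto_abs_mul (1/6) 2 two_ne_zero).add (tendsto_abs_mul (5/96) 3 three_ne_zero))
  filter_upwards [self_mem_nhdsWithin, ev_small] with x hx hx1
  have hx' : x ≠ 0 := hx
  have hx0 : (0:ℝ) < |x| := abs_pos.mpr hx
  have key : Real.sin x / x - 1 =
      ((Real.sin x - (x - x ^ 3 / 6)) - x ^ 3 / 6) / x := by
    field_simp; ring
  rw [key, abs_div, div_le_iff₀ hx0]
  calc |(Real.sin x - (x - x ^ 3 / 6)) - x ^ 3 / 6|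
      ≤ |Real.sin x - (x - x ^ 3 / 6)| + |x ^ 3 / 6| := abs_sub _ _
    _ ≤ |x| ^ 4 * (5/96) + |x| ^ 3 / 6 := by
        rw [abs_div, _root_.abs_pow]
        gcongr
        · exact (Real.sin_bound hx1).trans (by have h4 := pow_nonneg (abs_nonneg x) 4; have e : |x| ^ 5 = |x| ^ 4 * |x| := (by ring); rw [e]; nlinarith [mul_nonneg h4 (sub_nonneg.2 hx1)])
        · norm_num
    _ = (|x| ^ 2 * (1/6) + |x| ^ 3 * (5/96)) * |x| := by ring

private lemma h2x : Tendsto (fun x : ℝ => 2 * x) (𝓝[≠] (0:ℝ)) (𝓝[≠] (0:ℝ)) := by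
  rw [tendsto_nhdsWithin_iff]
  constructor
  · have : Tendsto (fun x : ℝ => 2 * x) (𝓝 (0:ℝ)) (𝓝 (2 * 0)) :=
      (continuous_const.mul continuous_id).tendsto 0
    simpa using this.mono_left nhdsWithin_le_nhds
  · filter_upwards [self_mem_nhdsWithin] with x hx
    exact mul_ne_zero two_ne_zero hx

/-- (x - sin x cos x)/x³ → 2/3 -/
private lemma La : Tendsto (fun x : ℝ => (x - Real.sin x * Real.cos x) / x ^ 3)
    (𝓝[≠] (0:ℝ)) (𝓝 (2/3)) := by
  have h := (L1.comp h2x).const_mul (4 : ℝ)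
  have he : (4 : ℝ) * (1/6) = 2/3 := by norm_num
  rw [he] at h
  refine h.congr' ?_
  filter_upwards [self_mem_nhdsWithin] with x hx
  have hx' : x ≠ 0 := hx
  have h2 : (2 * x) ^ 3 ≠ 0 := pow_ne_zero _ (mul_ne_zero two_ne_zero hx)
  have h3 : x ^ 3 ≠ 0 := pow_ne_zero _ hx
  show 4 * ((2 * x - Real.sin (2 * x)) / (2 * x) ^ 3) = (x - Real.sin x * Real.cos x) / x ^ 3
  rw [Real.sin_two_mul]
  field_simp
  ring

/-- (x² - sin²x)/x⁴ → 1/3 -/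
private lemma Ld : Tendsto (fun x : ℝ => (x ^ 2 - Real.sin x ^ 2) / x ^ 4)
    (𝓝[≠] (0:ℝ)) (𝓝 (1/3)) := by
  have h := L1.mul ((tendsto_const_nhds (x := (1:ℝ))).add Lsin)
  have he : (1/6 : ℝ) * (1 + 1) = 1/3 := by norm_num
  rw [he] at h
  refine h.congr' ?_
  filter_upwards [self_mem_nhdsWithin] with x hx
  have hx' : x ≠ 0 := hx
  have h3 : x ^ 3 ≠ 0 := pow_ne_zero _ hx
  have h4 : x ^ 4 ≠ 0 := pow_ne_zero _ hx
  show (x - Real.sin x) / x ^ 3 * (1 + Real.sin x / x) = (x ^ 2 - Real.sin x ^ 2) / x ^ 4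
  field_simp
  ring

private lemma hDne : ∀ x : ℝ, x ≠ 0 → x ^ 2 - Real.sin x ^ 2 ≠ 0 := fun x hx =>
  ne_of_gt (sub_pos.2 (Real.sin_sq_lt_sq hx))

/-- coefficient A → 4 -/
private lemma LA : Tendsto (fun x : ℝ =>
    2 * x * (x - Real.sin x * Real.cos x) / (x ^ 2 - Real.sin x ^ 2))
    (𝓝[≠] (0:ℝ)) (𝓝 4) := by
  have h := (La.const_mul (2:ℝ)).div Ld (by norm_num)
  have he : (2 : ℝ) * (2/3) / (1/3) = 4 := by norm_num
  rw [he] at h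
  refine h.congr' ?_
  filter_upwards [self_mem_nhdsWithin] with x hx
  have hx' : x ≠ 0 := hx
  have h3 : x ^ 3 ≠ 0 := pow_ne_zero _ hx
  have h4 : x ^ 4 ≠ 0 := pow_ne_zero _ hx
  have hD := hDne x hx
  show 2 * ((x - Real.sin x * Real.cos x) / x ^ 3) / ((x ^ 2 - Real.sin x ^ 2) / x ^ 4) = _
  field_simp

/-- coefficient B → 6 -/
private lemma LB : Tendsto (fun x : ℝ =>
    x ^ 2 * (x ^ 2 + Real.sin x ^ 2) / (x ^ 2 - Real.sin x ^ 2))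
    (𝓝[≠] (0:ℝ)) (𝓝 6) := by
  have hnum : Tendsto (fun x : ℝ => 1 + (Real.sin x / x) ^ 2) (𝓝[≠] (0:ℝ)) (𝓝 (1 + 1 ^ 2)) :=
    tendsto_const_nhds.add (Lsin.pow 2)
  have h := hnum.div Ld (by norm_num)
  have he : ((1 : ℝ) + 1 ^ 2) / (1/3) = 6 := by norm_num
  rw [he] at h
  refine h.congr' ?_
  filter_upwards [self_mem_nhdsWithin] with x hx
  have hx' : x ≠ 0 := hx
  have h2 : x ^ 2 ≠ 0 := pow_ne_zero _ hx
  have h4 : x ^ 4 ≠ 0 := pow_ne_zero _ hx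
  have hD := hDne x hx
  show (1 + (Real.sin x / x) ^ 2) / ((x ^ 2 - Real.sin x ^ 2) / x ^ 4) = _
  field_simp

/-- coefficient C → -2 -/
private lemma LC : Tendsto (fun x : ℝ =>
    2 * x * (x * Real.cos x - Real.sin x) / (x ^ 2 - Real.sin x ^ 2))
    (𝓝[≠] (0:ℝ)) (𝓝 (-2)) := by
  have h := ((L2.const_mul (-2:ℝ)).div Ld (by norm_num))
  have he : (-2 : ℝ) * (1/3) / (1/3) = -2 := by norm_num
  rw [he] at h
  refine h.congr' ?_
  filter_upwards [self_mem_nhdsWithin] with x hx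
  have hx' : x ≠ 0 := hx
  have h3 : x ^ 3 ≠ 0 := pow_ne_zero _ hx
  have h4 : x ^ 4 ≠ 0 := pow_ne_zero _ hx
  have hD := hDne x hx
  show -2 * ((Real.sin x - x * Real.cos x) / x ^ 3) / ((x ^ 2 - Real.sin x ^ 2) / x ^ 4) = _
  field_simp
  ring

/-- coefficient D → 6 -/
private lemma LD : Tendsto (fun x : ℝ =>
    2 * x ^ 3 * Real.sin x / (x ^ 2 - Real.sin x ^ 2))
    (𝓝[≠] (0:ℝ)) (𝓝 6) := by
  have h := ((Lsin.const_mul (2:ℝ)).div Ld (by norm_num))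
  have he : (2 : ℝ) * 1 / (1/3) = 6 := by norm_num
  rw [he] at h
  refine h.congr' ?_
  filter_upwards [self_mem_nhdsWithin] with x hx
  have hx' : x ≠ 0 := hx
  have h4 : x ^ 4 ≠ 0 := pow_ne_zero _ hx
  have hD := hDne x hx
  show 2 * (Real.sin x / x) / ((x ^ 2 - Real.sin x ^ 2) / x ^ 4) = _
  field_simp

/-- For fixed z ∈ ℂ, Δ̂_C(z; θ₀) converges to Δ̂_R(z) as θ₀ → 0 along
θ₀ ≠ 0. -/
theorem normalized_quasipolynomial_limit
    (z : ℂ)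
    (ΔC : ℂ → ℝ → ℂ)
    (hΔC : ∀ (w : ℂ) (θ₀ : ℝ), θ₀ ≠ 0 → ΔC w θ₀ =
      w ^ 2
      - (2 * θ₀ * (θ₀ - Real.sin θ₀ * Real.cos θ₀) / (θ₀ ^ 2 - Real.sin θ₀ ^ 2) : ℝ) * w
      + (θ₀ ^ 2 * (θ₀ ^ 2 + Real.sin θ₀ ^ 2) / (θ₀ ^ 2 - Real.sin θ₀ ^ 2) : ℝ)
      + Complex.exp (-w) *
        ((2 * θ₀ * (θ₀ * Real.cos θ₀ - Real.sin θ₀) / (θ₀ ^ 2 - Real.sin θ₀ ^ 2) : ℝ) * w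
          - (2 * θ₀ ^ 3 * Real.sin θ₀ / (θ₀ ^ 2 - Real.sin θ₀ ^ 2) : ℝ)))
    (ΔR : ℂ → ℂ)
    (hΔR : ∀ w : ℂ, ΔR w = w ^ 2 - 4 * w + 6 - Complex.exp (-w) * (2 * w + 6)) :
    Tendsto (fun θ₀ : ℝ => ΔC z θ₀) (𝓝[≠] 0) (𝓝 (ΔR z)) := by
  have cA : Tendsto (fun x : ℝ =>
      ((2 * x * (x - Real.sin x * Real.cos x) / (x ^ 2 - Real.sin x ^ 2) : ℝ) : ℂ))
      (𝓝[≠] (0:ℝ)) (𝓝 (4 : ℂ)) := by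
    exact (Complex.continuous_ofReal.tendsto 4).comp LA
  have cB : Tendsto (fun x : ℝ =>
      ((x ^ 2 * (x ^ 2 + Real.sin x ^ 2) / (x ^ 2 - Real.sin x ^ 2) : ℝ) : ℂ))
      (𝓝[≠] (0:ℝ)) (𝓝 (6 : ℂ)) :=
    (Complex.continuous_ofReal.tendsto 6).comp LB
  have cC : Tendsto (fun x : ℝ =>
      ((2 * x * (x * Real.cos x - Real.sin x) / (x ^ 2 - Real.sin x ^ 2) : ℝ) : ℂ))
      (𝓝[≠] (0:ℝ)) (𝓝 (-2 : ℂ)) := by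
    have h2 : ((-2 : ℝ) : ℂ) = (-2 : ℂ) := by norm_num
    exact h2 ▸ (Complex.continuous_ofReal.tendsto (-2)).comp LC
  have cD : Tendsto (fun x : ℝ =>
      ((2 * x ^ 3 * Real.sin x / (x ^ 2 - Real.sin x ^ 2) : ℝ) : ℂ))
      (𝓝[≠] (0:ℝ)) (𝓝 (6 : ℂ)) :=
    (Complex.continuous_ofReal.tendsto 6).comp LD
  have main : Tendsto (fun x : ℝ =>
      z ^ 2
      - ((2 * x * (x - Real.sin x * Real.cos x) / (x ^ 2 - Real.sin x ^ 2) : ℝ) : ℂ) * z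
      + ((x ^ 2 * (x ^ 2 + Real.sin x ^ 2) / (x ^ 2 - Real.sin x ^ 2) : ℝ) : ℂ)
      + Complex.exp (-z) *
        (((2 * x * (x * Real.cos x - Real.sin x) / (x ^ 2 - Real.sin x ^ 2) : ℝ) : ℂ) * z
          - ((2 * x ^ 3 * Real.sin x / (x ^ 2 - Real.sin x ^ 2) : ℝ) : ℂ)))
      (𝓝[≠] (0:ℝ))
      (𝓝 (z ^ 2 - 4 * z + 6 + Complex.exp (-z) * ((-2) * z - 6))) :=
    ((tendsto_const_nhds.sub (cA.mul tendsto_const_nhds)).add cB).add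
      (tendsto_const_nhds.mul ((cC.mul tendsto_const_nhds).sub cD))
  have heq : z ^ 2 - 4 * z + 6 + Complex.exp (-z) * ((-2) * z - 6) = ΔR z := by
    rw [hΔR]; ring
  rw [heq] at main
  refine main.congr' ?_
  filter_upwards [self_mem_nhdsWithin] with x hx
  have hx' : x ≠ 0 := hx
  exact (hΔC z x hx).symm
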